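/- Let α be a nonempty finite type, w : α → ℝ with w(a) > 0 for all a and Σ_a w(a) = 1, and c : α → ℝ with 0 ≤ c(a) ≤ 1 for all a. Set p₁ := Σ_a w(a)·c(a), m := min_a c(a), M := max_a c(a), and assume 0 < p₁ < 1. Then for every real r in the closed interval [(p₁ − m)/(1 − m), p₁/M], there exist q₀, q₁ ∈ [0,1] with q₀ < q₁ and a function π : α → ℝ with 0 ≤ π(a) ≤ 1 for all a, such that c(a) = q₀·(1 − π(a)) + q₁·π(a) for all a ∈ α and Σ_a w(a)·π(a) = r. (Attainability of every value in the sub-region bound of Proposition 3.) -/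

import Mathlib

/-- Attainability of every value in the sub-region bound of Proposition 3. -/
theorem stmt10 {α : Type*} [Fintype α] [Nonempty α]
    (w : α → ℝ) (hw : ∀ a, 0 < w a) (hwsum : ∑ a, w a = 1)
    (c : α → ℝ) (hc : ∀ a, c a ∈ Set.Icc (0:ℝ) 1)
    (p₁ m M : ℝ)
    (hp₁ : p₁ = ∑ a, w a * c a)
    (hm : m = Finset.univ.inf' Finset.univ_nonempty c)
    (hM : M = Finset.univ.sup' Finset.univ_nonempty c)
    (hp₁pos : 0 < p₁) (hp₁lt : p₁ < 1)
    (r : ℝ) (hr : r ∈ Set.Icc ((p₁ - m) / (1 - m)) (p₁ / M)) :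
    ∃ q₀ q₁ : ℝ, q₀ ∈ Set.Icc (0:ℝ) 1 ∧ q₁ ∈ Set.Icc (0:ℝ) 1 ∧ q₀ < q₁ ∧
      ∃ π : α → ℝ, (∀ a, 0 ≤ π a ∧ π a ≤ 1) ∧
        (∀ a, c a = q₀ * (1 - π a) + q₁ * π a) ∧
        ∑ a, w a * π a = r := by
  obtain ⟨a0, -, ha0⟩ := Finset.exists_mem_eq_inf' Finset.univ_nonempty c
  obtain ⟨a1, -, ha1⟩ := Finset.exists_mem_eq_sup' Finset.univ_nonempty c
  have hmle : ∀ a, m ≤ c a := fun a => hm ▸ Finset.inf'_le c (Finset.mem_univ a)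
  have hMge : ∀ a, c a ≤ M := fun a => hM ▸ Finset.le_sup' c (Finset.mem_univ a)
  have hm0 : 0 ≤ m := by rw [hm, ha0]; exact (hc a0).1
  have hM1 : M ≤ 1 := by rw [hM, ha1]; exact (hc a1).2
  have hmp : m ≤ p₁ := by
    rw [hp₁]
    calc m = ∑ a, w a * m := by rw [← Finset.sum_mul, hwsum, one_mul]
      _ ≤ ∑ a, w a * c a :=
        Finset.sum_le_sum fun a _ => mul_le_mul_of_nonneg_left (hmle a) (hw a).le
  have hpM : p₁ ≤ M := by
    rw [hp₁]
    calc ∑ a, w a * c a ≤ ∑ a, w a * M :=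
          Finset.sum_le_sum fun a _ => mul_le_mul_of_nonneg_left (hMge a) (hw a).le
      _ = M := by rw [← Finset.sum_mul, hwsum, one_mul]
  have hM0 : 0 < M := lt_of_lt_of_le hp₁pos hpM
  have hm1 : m < 1 := lt_of_le_of_lt hmp hp₁lt
  have hr0 : 0 ≤ r := le_trans (div_nonneg (by linarith) (by linarith)) hr.1
  have hrM : r * M ≤ p₁ := by
    have := hr.2; rw [le_div_iff₀ hM0] at this; linarith
  have hrm : p₁ - m ≤ r * (1 - m) := by
    have := hr.1; rw [div_le_iff₀ (by linarith)] at this; linarith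
  suffices h : ∀ q₀ q₁ : ℝ, 0 ≤ q₀ → q₀ ≤ m → M ≤ q₁ → q₁ ≤ 1 → q₀ < q₁ →
      (1 - r) * q₀ + r * q₁ = p₁ →
      (∃ q₀ q₁ : ℝ, q₀ ∈ Set.Icc (0:ℝ) 1 ∧ q₁ ∈ Set.Icc (0:ℝ) 1 ∧ q₀ < q₁ ∧
      ∃ π : α → ℝ, (∀ a, 0 ≤ π a ∧ π a ≤ 1) ∧
        (∀ a, c a = q₀ * (1 - π a) + q₁ * π a) ∧
        ∑ a, w a * π a = r) by
    rcases le_or_gt p₁ r with hpr | hpr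
    · have hrpos : 0 < r := lt_of_lt_of_le hp₁pos hpr
      exact h 0 (p₁ / r) le_rfl hm0
        (by rw [le_div_iff₀ hrpos]; linarith)
        (by rw [div_le_one hrpos]; exact hpr)
        (div_pos hp₁pos hrpos)
        (by field_simp; ring)
    · have hrlt1 : r < 1 := lt_trans hpr hp₁lt
      exact h ((p₁ - r) / (1 - r)) 1
        (div_nonneg (by linarith) (by linarith))
        (by rw [div_le_iff₀ (by linarith)]; linarith)
        hM1 le_rfl
        (by rw [div_lt_one (by linarith)]; linarith)
        (by
          have h1 : (1:ℝ) - r ≠ 0 := by linarith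
          field_simp; ring)
  intro q₀ q₁ h0 h0m hMq h11 hlt heq
  have hne : q₁ - q₀ ≠ 0 := sub_ne_zero.mpr hlt.ne'
  have hpos : 0 < q₁ - q₀ := by linarith
  refine ⟨q₀, q₁, ⟨h0, by linarith⟩, ⟨by linarith, h11⟩, hlt,
    fun a => (c a - q₀) / (q₁ - q₀), ?_, ?_, ?_⟩
  · intro a
    constructor
    · apply div_nonneg _ hpos.le; linarith [hmle a]
    · rw [div_le_one hpos]; linarith [hMge a]
  · intro a
    show c a = q₀ * (1 - (c a - q₀) / (q₁ - q₀)) + q₁ * ((c a - q₀) / (q₁ - q₀))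
    field_simp
    ring
  · have hsum : ∑ a, w a * ((c a - q₀) / (q₁ - q₀)) = (p₁ - q₀) / (q₁ - q₀) := by
      simp_rw [← mul_div_assoc]
      rw [← Finset.sum_div]
      congr 1
      simp_rw [mul_sub]
      rw [Finset.sum_sub_distrib, ← Finset.sum_mul, hwsum, one_mul, hp₁]
    rw [hsum, div_eq_iff hne]
    linear_combination -heq
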